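/- (Korovkin theorem for periodic functions via P-statistical convergence.) Let P be a regular power series method and let (G_j) be a sequence of positive linear operators from C_{2π}(ℝ) into B(ℝ). Then st_P-lim_{j→∞} ‖G_j(ψ) − ψ‖ = 0 holds for every ψ ∈ C_{2π}(ℝ) if and only if st_P-lim_{j→∞} ‖G_j(ψ_λ) − ψ_λ‖ = 0 for λ = 1, 2, 3, where ψ_1(y) = 1, ψ_2(y) = cos y, ψ_3(y) = sin y, and ‖·‖ is the sup norm on B(ℝ). -/

import Mathlib

open Filter Topology
open scoped ENNReal

/-- A power series method `P`: a sequence `(s j)` of nonnegative reals with `s 0 > 0`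
whose power series `s(t) = ∑ s j * t ^ j` has radius of convergence `R`, `0 < R ≤ ∞`. -/
structure PowerSeriesMethod where
  s : ℕ → ℝ
  s_nonneg : ∀ j, 0 ≤ s j
  s0_pos : 0 < s 0
  R : ℝ≥0∞
  R_pos : 0 < R
  summable_of_lt : ∀ t : ℝ, 0 < t → ENNReal.ofReal t < R → Summable fun j => s j * t ^ j
  not_summable_of_gt : ∀ t : ℝ, R < ENNReal.ofReal t → ¬ Summable fun j => s j * t ^ j

namespace PowerSeriesMethod

/-- The filter of `t` tending to `R` from the left (through `0 < t < R`);
if `R = ∞` this is `atTop`. -/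
noncomputable def limFilter (P : PowerSeriesMethod) : Filter ℝ :=
  if P.R = ⊤ then Filter.atTop else nhdsWithin P.R.toReal (Set.Ioo 0 P.R.toReal)

/-- `s(t) = ∑ s j t ^ j`. -/
noncomputable def sum (P : PowerSeriesMethod) (t : ℝ) : ℝ := ∑' j, P.s j * t ^ j

/-- The quotient `(∑_{j ∈ E} s j t ^ j) / s(t)` whose limit as `t → R⁻` is the `P`-density. -/
noncomputable def densityFn (P : PowerSeriesMethod) (E : Set ℕ) (t : ℝ) : ℝ :=
  (∑' j, Set.indicator E (fun j => P.s j * t ^ j) j) / P.sum t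

/-- `E ⊆ ℕ` has `P`-density `d`. -/
def HasDensity (P : PowerSeriesMethod) (E : Set ℕ) (d : ℝ) : Prop :=
  Tendsto (P.densityFn E) P.limFilter (𝓝 d)

/-- The power series method `P` is regular. -/
def Regular (P : PowerSeriesMethod) : Prop :=
  ∀ j, Tendsto (fun t => P.s j * t ^ j / P.sum t) P.limFilter (𝓝 0)

/-- The sequence `x` is `P`-statistically convergent to `L`. -/
def StatTendsto (P : PowerSeriesMethod) (x : ℕ → ℝ) (L : ℝ) : Prop :=
  ∀ ε : ℝ, 0 < ε → P.HasDensity {j | ε ≤ |x j - L|} 0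

end PowerSeriesMethod

/-- The space `C_{2π}(ℝ)` of `2π`-periodic continuous functions, as a submodule of `C(ℝ, ℝ)`. -/
noncomputable def C2pi : Submodule ℝ C(ℝ, ℝ) where
  carrier := {f : C(ℝ, ℝ) | Function.Periodic f (2 * Real.pi)}
  add_mem' := fun hf hg x => by simp [hf x, hg x]
  zero_mem' := fun x => by simp
  smul_mem' := fun c f hf x => by simp [hf x]

/-- The constant function `1` as an element of `C_{2π}(ℝ)`. -/
noncomputable def onePer : C2pi := ⟨1, fun x => rfl⟩

/-- `cos` as an element of `C_{2π}(ℝ)`. -/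
noncomputable def cosPer : C2pi := ⟨⟨Real.cos, Real.continuous_cos⟩, Real.cos_periodic⟩

/-- `sin` as an element of `C_{2π}(ℝ)`. -/
noncomputable def sinPer : C2pi := ⟨⟨Real.sin, Real.continuous_sin⟩, Real.sin_periodic⟩

section Aux

namespace PowerSeriesMethod

variable (P : PowerSeriesMethod)

lemma eventually_mem : ∀ᶠ t in P.limFilter, 0 < t ∧ ENNReal.ofReal t < P.R := by
  unfold PowerSeriesMethod.limFilter
  split_ifs with h
  · filter_upwards [Filter.eventually_gt_atTop (0 : ℝ)] with t ht
    exact ⟨ht, h ▸ ENNReal.ofReal_lt_top⟩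
  · filter_upwards [self_mem_nhdsWithin] with t ht
    exact ⟨ht.1, (ENNReal.ofReal_lt_iff_lt_toReal ht.1.le h).mpr ht.2⟩

lemma sum_pos {t : ℝ} (ht : 0 < t) (hR : ENNReal.ofReal t < P.R) : 0 < P.sum t := by
  have hsum := P.summable_of_lt t ht hR
  have h0 : P.s 0 * t ^ 0 ≤ P.sum t :=
    Summable.le_tsum hsum 0 (fun j _ => mul_nonneg (P.s_nonneg j) (pow_nonneg ht.le j))
  have : P.s 0 * t ^ 0 = P.s 0 := by simp
  linarith [P.s0_pos]

lemma densityFn_nonneg (E : Set ℕ) {t : ℝ} (ht : 0 < t) (hR : ENNReal.ofReal t < P.R) :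
    0 ≤ P.densityFn E t := by
  apply div_nonneg _ (P.sum_pos ht hR).le
  exact tsum_nonneg fun j => Set.indicator_nonneg
    (fun i _ => mul_nonneg (P.s_nonneg i) (pow_nonneg ht.le i)) j

lemma densityFn_mono {E F : Set ℕ} (hEF : E ⊆ F) {t : ℝ} (ht : 0 < t)
    (hR : ENNReal.ofReal t < P.R) : P.densityFn E t ≤ P.densityFn F t := by
  have hsum := P.summable_of_lt t ht hR
  have hnn : ∀ j, 0 ≤ P.s j * t ^ j := fun j => mul_nonneg (P.s_nonneg j) (pow_nonneg ht.le j)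
  unfold PowerSeriesMethod.densityFn
  rw [div_le_div_iff_of_pos_right (P.sum_pos ht hR)]
  exact Summable.tsum_le_tsum
    (fun j => Set.indicator_le_indicator_of_subset hEF (fun i => hnn i) j)
    (hsum.indicator _) (hsum.indicator _)

lemma hasDensity_zero_mono {E F : Set ℕ} (hEF : E ⊆ F) (hF : P.HasDensity F 0) :
    P.HasDensity E 0 := by
  refine squeeze_zero' ?_ ?_ hF
  · filter_upwards [P.eventually_mem] with t ht using P.densityFn_nonneg E ht.1 ht.2
  · filter_upwards [P.eventually_mem] with t ht using P.densityFn_mono hEF ht.1 ht.2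

lemma hasDensity_zero_union {E F : Set ℕ} (hE : P.HasDensity E 0) (hF : P.HasDensity F 0) :
    P.HasDensity (E ∪ F) 0 := by
  have h : Tendsto (fun t => P.densityFn E t + P.densityFn F t) P.limFilter (𝓝 0) := by
    simpa using hE.add hF
  refine squeeze_zero' ?_ ?_ h
  · filter_upwards [P.eventually_mem] with t ht using P.densityFn_nonneg _ ht.1 ht.2
  · filter_upwards [P.eventually_mem] with t ht
    obtain ⟨ht1, ht2⟩ := ht
    have hsum := P.summable_of_lt t ht1 ht2
    have hnn : ∀ j, 0 ≤ P.s j * t ^ j := fun j => mul_nonneg (P.s_nonneg j) (pow_nonneg ht1.le j)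
    have hpt : ∀ j, Set.indicator (E ∪ F) (fun j => P.s j * t ^ j) j ≤
        Set.indicator E (fun j => P.s j * t ^ j) j + Set.indicator F (fun j => P.s j * t ^ j) j := by
      intro j
      by_cases hjE : j ∈ E <;> by_cases hjF : j ∈ F <;>
        simp [Set.indicator_apply, hjE, hjF, hnn j]
    have h1 : (∑' j, Set.indicator (E ∪ F) (fun j => P.s j * t ^ j) j) ≤
        (∑' j, Set.indicator E (fun j => P.s j * t ^ j) j) +
          (∑' j, Set.indicator F (fun j => P.s j * t ^ j) j) := by
      rw [← Summable.tsum_add (hsum.indicator E) (hsum.indicator F)]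
      exact Summable.tsum_le_tsum hpt (hsum.indicator _) ((hsum.indicator E).add (hsum.indicator F))
    unfold PowerSeriesMethod.densityFn
    rw [← add_div, div_le_div_iff_of_pos_right (P.sum_pos ht1 ht2)]
    exact h1

end PowerSeriesMethod

lemma statTendsto_of_bound (P : PowerSeriesMethod) (a u c s : ℕ → ℝ)
    (hb : ∀ ε : ℝ, 0 < ε → ∃ M : ℝ, 0 < M ∧ ∀ j, |a j| ≤ ε + M * (|u j| + |c j| + |s j|))
    (hu : P.StatTendsto u 0) (hc : P.StatTendsto c 0) (hs : P.StatTendsto s 0) :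
    P.StatTendsto a 0 := by
  intro ε hε
  obtain ⟨M, hM, hMb⟩ := hb (ε / 2) (by linarith)
  have hη : 0 < ε / (6 * M) := by positivity
  have hsub : {j | ε ≤ |a j - 0|} ⊆
      ({j | ε / (6 * M) ≤ |u j - 0|} ∪ {j | ε / (6 * M) ≤ |c j - 0|}) ∪
        {j | ε / (6 * M) ≤ |s j - 0|} := by
    intro j hj
    simp only [Set.mem_setOf_eq, sub_zero] at hj ⊢
    by_contra hcon
    simp only [Set.mem_union, Set.mem_setOf_eq, sub_zero, not_or, not_le] at hcon
    obtain ⟨⟨h1, h2⟩, h3⟩ := hcon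
    have := hMb j
    have hM6 : M * (|u j| + |c j| + |s j|) < M * (3 * (ε / (6 * M))) := by
      apply mul_lt_mul_of_pos_left (by linarith) hM
    have : M * (3 * (ε / (6 * M))) = ε / 2 := by field_simp; ring
    linarith [hMb j]
  exact P.hasDensity_zero_mono hsub
    (P.hasDensity_zero_union (P.hasDensity_zero_union (hu _ hη) (hc _ hη)) (hs _ hη))

lemma per_bound (f : C(ℝ, ℝ)) (hf : Function.Periodic f (2 * Real.pi)) :
    ∃ Mf : ℝ, 0 ≤ Mf ∧ ∀ x, |f x| ≤ Mf := by
  obtain ⟨C, hC⟩ := (isCompact_Icc (a := (0:ℝ)) (b := 2 * Real.pi)).exists_bound_of_continuousOn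
    (map_continuous f).continuousOn
  refine ⟨max C 0, le_max_right _ _, fun x => ?_⟩
  have h2π : (0:ℝ) < 2 * Real.pi := by positivity
  set k := ⌊x / (2 * Real.pi)⌋
  have h1 : 0 ≤ x - k * (2 * Real.pi) := Int.sub_floor_div_mul_nonneg x h2π
  have h2 : x - k * (2 * Real.pi) < 2 * Real.pi := Int.sub_floor_div_mul_lt x h2π
  have hfx : f (x - k * (2 * Real.pi)) = f x := hf.sub_int_mul_eq k
  calc |f x| = |f (x - k * (2 * Real.pi))| := by rw [hfx]
    _ ≤ C := by simpa using hC _ ⟨h1, h2.le⟩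
    _ ≤ max C 0 := le_max_left _ _

lemma per_unif (f : C(ℝ, ℝ)) (hf : Function.Periodic f (2 * Real.pi)) {ε : ℝ} (hε : 0 < ε) :
    ∃ δ : ℝ, 0 < δ ∧ δ ≤ 1 ∧ ∀ a b : ℝ, |b - a| < δ → |f b - f a| ≤ ε := by
  have h2π : (0:ℝ) < 2 * Real.pi := by positivity
  have hK : IsCompact (Set.Icc (-1 : ℝ) (2 * Real.pi + 1)) := isCompact_Icc
  have huc : UniformContinuousOn f (Set.Icc (-1 : ℝ) (2 * Real.pi + 1)) :=
    hK.uniformContinuousOn_of_continuous (map_continuous f).continuousOn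
  obtain ⟨δ0, hδ0, hδ0'⟩ := (Metric.uniformContinuousOn_iff).mp huc ε hε
  refine ⟨min δ0 1, lt_min hδ0 one_pos, min_le_right _ _, fun a b hab => ?_⟩
  set k := ⌊a / (2 * Real.pi)⌋
  have h1 : 0 ≤ a - k * (2 * Real.pi) := Int.sub_floor_div_mul_nonneg a h2π
  have h2 : a - k * (2 * Real.pi) < 2 * Real.pi := Int.sub_floor_div_mul_lt a h2π
  have hfa : f (a - k * (2 * Real.pi)) = f a := hf.sub_int_mul_eq k
  have hfb : f (b - k * (2 * Real.pi)) = f b := hf.sub_int_mul_eq k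
  have hab1 : |b - a| < 1 := lt_of_lt_of_le hab (min_le_right _ _)
  have hab0 : |b - a| < δ0 := lt_of_lt_of_le hab (min_le_left _ _)
  have habs := abs_lt.mp hab1
  have hmem_a : a - k * (2 * Real.pi) ∈ Set.Icc (-1 : ℝ) (2 * Real.pi + 1) :=
    ⟨by linarith, by linarith⟩
  have hmem_b : b - k * (2 * Real.pi) ∈ Set.Icc (-1 : ℝ) (2 * Real.pi + 1) :=
    ⟨by linarith, by linarith⟩
  have hdist : dist (b - k * (2 * Real.pi)) (a - k * (2 * Real.pi)) < δ0 := by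
    rw [Real.dist_eq]
    have : b - k * (2 * Real.pi) - (a - k * (2 * Real.pi)) = b - a := by ring
    rw [this]; exact hab0
  have := hδ0' _ hmem_b _ hmem_a hdist
  rw [Real.dist_eq, hfb, hfa] at this
  exact this.le

lemma key_ineq (f : C(ℝ, ℝ)) (hf : Function.Periodic f (2 * Real.pi))
    {ε Mf : ℝ} (hε : 0 < ε) (hMf : ∀ x, |f x| ≤ Mf) :
    ∃ K : ℝ, 0 ≤ K ∧ ∀ x y : ℝ, |f y - f x| ≤ ε + K * (1 - Real.cos (y - x)) := by
  have h2π : (0:ℝ) < 2 * Real.pi := by positivity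
  have hMf0 : 0 ≤ Mf := (abs_nonneg _).trans (hMf 0)
  obtain ⟨δ, hδ, hδ1, hδ'⟩ := per_unif f hf hε
  have hδπ : δ ≤ Real.pi := hδ1.trans (by linarith [Real.pi_gt_three])
  have hcosδ : Real.cos δ < 1 := by
    have := Real.strictAntiOn_cos ⟨le_refl 0, Real.pi_pos.le⟩ ⟨hδ.le, hδπ⟩ hδ
    simpa using this
  set K := 2 * Mf / (1 - Real.cos δ) with hKdef
  have hKnn : 0 ≤ K := div_nonneg (by linarith) (by linarith)
  refine ⟨K, hKnn, fun x y => ?_⟩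
  set u := y - x with hu
  set r := round (u / (2 * Real.pi)) with hr
  set u' := u - r * (2 * Real.pi) with hu'
  have hround : |u / (2 * Real.pi) - r| ≤ 1 / 2 := abs_sub_round _
  have hu'eq : u' = (2 * Real.pi) * (u / (2 * Real.pi) - r) := by
    field_simp [hu']; ring
  have hu'pi : |u'| ≤ Real.pi := by
    rw [hu'eq, abs_mul, abs_of_pos h2π]
    calc 2 * Real.pi * |u / (2 * Real.pi) - r| ≤ 2 * Real.pi * (1 / 2) :=
          mul_le_mul_of_nonneg_left hround h2π.le
      _ = Real.pi := by ring
  have hcosu : Real.cos u = Real.cos u' := (Real.cos_sub_int_mul_two_pi u r).symm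
  have hfyu : f y = f (x + u') := by
    have : x + u' = y - r * (2 * Real.pi) := by simp [hu', hu]; ring
    rw [this, hf.sub_int_mul_eq r]
  have hcosle : Real.cos u ≤ 1 := Real.cos_le_one u
  by_cases hcase : |u'| < δ
  · have : |f (x + u') - f x| ≤ ε := hδ' x (x + u') (by simpa using hcase)
    rw [hfyu]
    nlinarith [mul_nonneg hKnn (by linarith : (0:ℝ) ≤ 1 - Real.cos u)]
  · push_neg at hcase
    have hcosu' : Real.cos u' ≤ Real.cos δ := by
      rw [← Real.cos_abs u']
      exact Real.cos_le_cos_of_nonneg_of_le_pi hδ.le hu'pi hcase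
    have hKbig : 2 * Mf ≤ K * (1 - Real.cos u) := by
      rw [hcosu]
      have h1 : K * (1 - Real.cos δ) = 2 * Mf := by
        rw [hKdef, div_mul_cancel₀ _ (by linarith : (1:ℝ) - Real.cos δ ≠ 0)]
      nlinarith
    have : |f y - f x| ≤ 2 * Mf := by
      calc |f y - f x| ≤ |f y| + |f x| := abs_sub _ _
        _ ≤ Mf + Mf := add_le_add (hMf y) (hMf x)
        _ = 2 * Mf := by ring
    linarith

lemma op_bound (G : C2pi →ₗ[ℝ] (ℝ → ℝ))
    (hpos : ∀ f : C2pi, (∀ x : ℝ, 0 ≤ (f : C(ℝ, ℝ)) x) → ∀ x : ℝ, 0 ≤ G f x)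
    (f : C2pi) {ε K Mf : ℝ} (hε : 0 < ε) (hK : 0 ≤ K)
    (hMf : ∀ x, |(f : C(ℝ, ℝ)) x| ≤ Mf)
    (hkey : ∀ x y : ℝ, |(f : C(ℝ, ℝ)) y - (f : C(ℝ, ℝ)) x| ≤ ε + K * (1 - Real.cos (y - x)))
    (x : ℝ) :
    |G f x - (f : C(ℝ, ℝ)) x| ≤ ε + (ε + K + Mf) *
      (|G onePer x - 1| + |G cosPer x - Real.cos x| + |G sinPer x - Real.sin x|) := by
  set fx := (f : C(ℝ, ℝ)) x with hfx
  set cx := Real.cos x with hcx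
  set sx := Real.sin x with hsx
  set gp : C2pi := (ε + K - fx) • onePer - (K * cx) • cosPer - (K * sx) • sinPer + f with hgp
  set gm : C2pi := (ε + K + fx) • onePer - (K * cx) • cosPer - (K * sx) • sinPer - f with hgm
  have hgpv : ∀ y : ℝ, (gp : C(ℝ, ℝ)) y =
      (ε + K - fx) - K * cx * Real.cos y - K * sx * Real.sin y + (f : C(ℝ, ℝ)) y := by
    intro y
    simp [hgp, onePer, cosPer, sinPer]
  have hgmv : ∀ y : ℝ, (gm : C(ℝ, ℝ)) y =
      (ε + K + fx) - K * cx * Real.cos y - K * sx * Real.sin y - (f : C(ℝ, ℝ)) y := by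
    intro y
    simp [hgm, onePer, cosPer, sinPer]
  have hcossub : ∀ y : ℝ, Real.cos (y - x) = Real.cos y * cx + Real.sin y * sx := by
    intro y; rw [Real.cos_sub]
  have hgppos : ∀ y : ℝ, 0 ≤ (gp : C(ℝ, ℝ)) y := by
    intro y
    rw [hgpv y]
    have h := (abs_le.mp (hkey x y)).1
    rw [hcossub y] at h
    linarith
  have hgmpos : ∀ y : ℝ, 0 ≤ (gm : C(ℝ, ℝ)) y := by
    intro y
    rw [hgmv y]
    have h := (abs_le.mp (hkey x y)).2
    rw [hcossub y] at h
    linarith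
  set g1 := G onePer x with hg1
  set gc := G cosPer x with hgc
  set gs := G sinPer x with hgs
  set gf := G f x with hgf
  have i1 : 0 ≤ (ε + K - fx) * g1 - K * cx * gc - K * sx * gs + gf := by
    have h := hpos gp hgppos x
    have e : G gp x = (ε + K - fx) * g1 - K * cx * gc - K * sx * gs + gf := by
      simp [hgp, map_add, map_sub, map_smul, hg1, hgc, hgs, hgf]
    linarith [e ▸ h]
  have i2 : 0 ≤ (ε + K + fx) * g1 - K * cx * gc - K * sx * gs - gf := by
    have h := hpos gm hgmpos x
    have e : G gm x = (ε + K + fx) * g1 - K * cx * gc - K * sx * gs - gf := by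
      simp [hgm, map_add, map_sub, map_smul, hg1, hgc, hgs, hgf]
    linarith [e ▸ h]
  have e1 : (ε + K - fx) * g1 = (ε + K) * g1 - fx * g1 := by ring
  have e2 : (ε + K + fx) * g1 = (ε + K) * g1 + fx * g1 := by ring
  rw [e1] at i1; rw [e2] at i2
  have hA : |gf - fx * g1| ≤ (ε + K) * g1 - K * cx * gc - K * sx * gs :=
    abs_le.mpr ⟨by linarith, by linarith⟩
  have habs : ∀ (cc d : ℝ), |cc| ≤ 1 → -(K * cc * d) ≤ K * |d| := by
    intro cc d h
    calc -(K * cc * d) ≤ |K * cc * d| := neg_le_abs _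
      _ = |K| * |cc| * |d| := by rw [abs_mul, abs_mul]
      _ = K * |cc| * |d| := by rw [abs_of_nonneg hK]
      _ ≤ K * 1 * |d| := by
          apply mul_le_mul_of_nonneg_right _ (abs_nonneg d)
          exact mul_le_mul_of_nonneg_left h hK
      _ = K * |d| := by ring
  have hpyth : cx ^ 2 + sx ^ 2 = 1 := by
    rw [hcx, hsx, ← Real.sin_sq_add_cos_sq x]; ring
  have hexp : (ε + K) * g1 - K * cx * gc - K * sx * gs =
      ε + (ε + K) * (g1 - 1) - K * cx * (gc - cx) - K * sx * (gs - sx) +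
        K * (1 - (cx ^ 2 + sx ^ 2)) := by ring
  have hz : K * (1 - (cx ^ 2 + sx ^ 2)) = 0 := by rw [hpyth]; ring
  have p1 : (ε + K) * (g1 - 1) ≤ (ε + K) * |g1 - 1| :=
    mul_le_mul_of_nonneg_left (le_abs_self _) (by linarith)
  have p2 : -(K * cx * (gc - cx)) ≤ K * |gc - cx| :=
    habs cx (gc - cx) (by rw [hcx]; exact Real.abs_cos_le_one x)
  have p3 : -(K * sx * (gs - sx)) ≤ K * |gs - sx| :=
    habs sx (gs - sx) (by rw [hsx]; exact Real.abs_sin_le_one x)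
  have hA2 : (ε + K) * g1 - K * cx * gc - K * sx * gs ≤
      ε + (ε + K) * |g1 - 1| + K * |gc - cx| + K * |gs - sx| := by
    rw [hexp, hz]; linarith
  have hfxb : |fx| ≤ Mf := hMf x
  have hMf0 : 0 ≤ Mf := (abs_nonneg _).trans hfxb
  have h5 : |gf - fx| ≤ |gf - fx * g1| + |fx * g1 - fx| := abs_sub_le _ _ _
  have h6 : |fx * g1 - fx| ≤ Mf * |g1 - 1| := by
    rw [show fx * g1 - fx = fx * (g1 - 1) from by ring, abs_mul]
    exact mul_le_mul_of_nonneg_right hfxb (abs_nonneg _)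
  have h7 : (ε + K) * |g1 - 1| + K * |gc - cx| + K * |gs - sx| + Mf * |g1 - 1| ≤
      (ε + K + Mf) * (|g1 - 1| + |gc - cx| + |gs - sx|) := by
    have e7 : (ε + K + Mf) * (|g1 - 1| + |gc - cx| + |gs - sx|) =
        (ε + K) * |g1 - 1| + K * |gc - cx| + K * |gs - sx| + Mf * |g1 - 1| +
          (ε + Mf) * (|gc - cx| + |gs - sx|) := by ring
    have e8 : 0 ≤ (ε + Mf) * (|gc - cx| + |gs - sx|) :=
      mul_nonneg (by linarith) (add_nonneg (abs_nonneg _) (abs_nonneg _))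
    linarith
  linarith

end Aux

/-- Korovkin theorem for periodic functions via `P`-statistical convergence:
for positive linear operators `G_j` from `C_{2π}(ℝ)` into `B(ℝ)` (bounded functions with the
sup norm), `st_P-lim ‖G_j ψ − ψ‖ = 0` for every `ψ ∈ C_{2π}(ℝ)` iff it holds for the three
test functions `1`, `cos`, `sin`. -/
theorem periodic_korovkin_pstat (P : PowerSeriesMethod) (hP : P.Regular)
    (G : ℕ → C2pi →ₗ[ℝ] (ℝ → ℝ))
    (hGb : ∀ j (f : C2pi), ∃ K : ℝ, ∀ x : ℝ, |G j f x| ≤ K)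
    (hGpos : ∀ j (f : C2pi), (∀ x : ℝ, 0 ≤ (f : C(ℝ, ℝ)) x) → ∀ x : ℝ, 0 ≤ G j f x) :
    (∀ f : C2pi, P.StatTendsto (fun j => ⨆ x : ℝ, |G j f x - (f : C(ℝ, ℝ)) x|) 0) ↔
      (P.StatTendsto (fun j => ⨆ x : ℝ, |G j onePer x - 1|) 0 ∧
       P.StatTendsto (fun j => ⨆ x : ℝ, |G j cosPer x - Real.cos x|) 0 ∧
       P.StatTendsto (fun j => ⨆ x : ℝ, |G j sinPer x - Real.sin x|) 0) := by
  have onePer_apply : ∀ x : ℝ, ((onePer : C2pi) : C(ℝ, ℝ)) x = 1 := fun _ => rfl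
  have cosPer_apply : ∀ x : ℝ, ((cosPer : C2pi) : C(ℝ, ℝ)) x = Real.cos x := fun _ => rfl
  have sinPer_apply : ∀ x : ℝ, ((sinPer : C2pi) : C(ℝ, ℝ)) x = Real.sin x := fun _ => rfl
  constructor
  · intro h
    refine ⟨?_, ?_, ?_⟩
    · simpa only [onePer_apply] using h onePer
    · simpa only [cosPer_apply] using h cosPer
    · simpa only [sinPer_apply] using h sinPer
  · rintro ⟨h1, h2, h3⟩ f
    have hfper : Function.Periodic (f : C(ℝ, ℝ)) (2 * Real.pi) := f.2
    obtain ⟨Mf, hMf0, hMf⟩ := per_bound (f : C(ℝ, ℝ)) hfper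
    set u := fun j => ⨆ x : ℝ, |G j onePer x - 1| with hudef
    set c := fun j => ⨆ x : ℝ, |G j cosPer x - Real.cos x| with hcdef
    set sfn := fun j => ⨆ x : ℝ, |G j sinPer x - Real.sin x| with hsdef
    set a := fun j => ⨆ x : ℝ, |G j f x - (f : C(ℝ, ℝ)) x| with hadef
    have bdd1 : ∀ j, BddAbove (Set.range fun x => |G j onePer x - 1|) := by
      intro j
      obtain ⟨K1, hK1⟩ := hGb j onePer
      refine ⟨K1 + 1, ?_⟩
      rintro _ ⟨x, rfl⟩
      calc |G j onePer x - 1| ≤ |G j onePer x| + |(1:ℝ)| := abs_sub _ _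
        _ ≤ K1 + 1 := by simpa using add_le_add_right (hK1 x) 1
    have bddc : ∀ j, BddAbove (Set.range fun x => |G j cosPer x - Real.cos x|) := by
      intro j
      obtain ⟨K1, hK1⟩ := hGb j cosPer
      refine ⟨K1 + 1, ?_⟩
      rintro _ ⟨x, rfl⟩
      calc |G j cosPer x - Real.cos x| ≤ |G j cosPer x| + |Real.cos x| := abs_sub _ _
        _ ≤ K1 + 1 := add_le_add (hK1 x) (Real.abs_cos_le_one x)
    have bdds : ∀ j, BddAbove (Set.range fun x => |G j sinPer x - Real.sin x|) := by
      intro j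
      obtain ⟨K1, hK1⟩ := hGb j sinPer
      refine ⟨K1 + 1, ?_⟩
      rintro _ ⟨x, rfl⟩
      calc |G j sinPer x - Real.sin x| ≤ |G j sinPer x| + |Real.sin x| := abs_sub _ _
        _ ≤ K1 + 1 := add_le_add (hK1 x) (Real.abs_sin_le_one x)
    refine statTendsto_of_bound P a u c sfn ?_ h1 h2 h3
    intro ε hε
    obtain ⟨K, hK, hkey⟩ := key_ineq (f : C(ℝ, ℝ)) hfper hε hMf
    refine ⟨ε + K + Mf, by linarith, fun j => ?_⟩
    have hun : 0 ≤ u j := Real.iSup_nonneg fun x => abs_nonneg _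
    have hcn : 0 ≤ c j := Real.iSup_nonneg fun x => abs_nonneg _
    have hsn : 0 ≤ sfn j := Real.iSup_nonneg fun x => abs_nonneg _
    have han : 0 ≤ a j := Real.iSup_nonneg fun x => abs_nonneg _
    rw [abs_of_nonneg han, abs_of_nonneg hun, abs_of_nonneg hcn, abs_of_nonneg hsn]
    refine ciSup_le fun x => ?_
    have hx := op_bound (G j) (hGpos j) f hε hK hMf hkey x
    have l1 : |G j onePer x - 1| ≤ u j := le_ciSup (bdd1 j) x
    have l2 : |G j cosPer x - Real.cos x| ≤ c j := le_ciSup (bddc j) x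
    have l3 : |G j sinPer x - Real.sin x| ≤ sfn j := le_ciSup (bdds j) x
    have hm : (ε + K + Mf) *
        (|G j onePer x - 1| + |G j cosPer x - Real.cos x| + |G j sinPer x - Real.sin x|) ≤
        (ε + K + Mf) * (u j + c j + sfn j) :=
      mul_le_mul_of_nonneg_left (by linarith) (by linarith)
    linarith
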